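/- (MLMC complexity, β > γ case) Suppose |E[P_ℓ − P]| ≤ c₁ 2^{−αℓ}, Var[P_ℓ − P_{ℓ−1}] ≤ c₂ 2^{−βℓ}, and the cost per sample on level ℓ satisfies C_ℓ ≤ c₃ 2^{γℓ}, with α ≥ min(β,γ)/2 > 0 and β > γ > 0. Then for every ε ∈ (0, e^{−1}) there exist L ∈ ℕ and sample sizes N₁,…,N_L such that the MLMC estimator P̄ satisfies E[(P̄ − E[P])²] ≤ ε² and total cost ∑_{ℓ=1}^L N_ℓ C_ℓ ≤ c₄ ε^{−2} for a constant c₄ independent of ε. -/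

import Mathlib

open MeasureTheory ProbabilityTheory

lemma geomShift (r : ℝ) (L : ℕ) :
    ∑ ℓ ∈ Finset.Icc 1 L, r ^ ℓ = r * ∑ i ∈ Finset.range L, r ^ i := by
  induction L with
  | zero => simp
  | succ L ih =>
      rw [Finset.sum_Icc_succ_top (Nat.one_le_iff_ne_zero.mpr (Nat.succ_ne_zero L)), ih,
        Finset.sum_range_succ]
      ring

lemma geomIccA {r : ℝ} (h0 : 0 ≤ r) (h1 : r < 1) (L : ℕ) :
    ∑ ℓ ∈ Finset.Icc 1 L, r ^ ℓ ≤ r / (1 - r) := by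
  rw [geomShift, div_eq_mul_inv]
  have hg : ∑ i ∈ Finset.range L, r ^ i ≤ (1 - r)⁻¹ := by
    rw [geom_sum_eq h1.ne L, div_le_iff_of_neg (by linarith)]
    have h2 : (1 - r)⁻¹ * (r - 1) = -1 := by
      rw [inv_mul_eq_div, div_eq_iff (by linarith : (1:ℝ) - r ≠ 0)]
      ring
    rw [h2]
    nlinarith [pow_nonneg h0 L]
  exact mul_le_mul_of_nonneg_left hg h0

lemma geomIccB {s : ℝ} (h1 : 1 < s) (L : ℕ) :
    ∑ ℓ ∈ Finset.Icc 1 L, s ^ ℓ ≤ s / (s - 1) * s ^ L := by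
  have hs1 : (0:ℝ) < s - 1 := by linarith
  rw [geomShift, geom_sum_eq h1.ne' L, div_mul_eq_mul_div, mul_div_assoc,
    mul_le_mul_iff_right₀ (by linarith : (0:ℝ) < s), div_le_div_iff₀ hs1 hs1]
  nlinarith [pow_pos (by linarith : (0:ℝ) < s) L]

set_option maxHeartbeats 2000000 in
/-- MLMC complexity theorem, case `β > γ`: under the bias bound
`|E[P_ℓ - P]| ≤ c₁ 2^{-αℓ}`, the variance bound `Var[P_ℓ - P_{ℓ-1}] ≤ c₂ 2^{-βℓ}` and
the cost bound `C_ℓ ≤ c₃ 2^{γℓ}`, with `α ≥ min(β,γ)/2 > 0` and `β > γ > 0`, there is a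
constant `c₄` such that for every `ε ∈ (0, e⁻¹)` one can choose a number of levels `L`
and sample sizes `N_ℓ ≥ 1` so that the mean-squared error of the MLMC estimator,
decomposed as squared bias plus `∑_ℓ Var[Y_ℓ]/N_ℓ`, is at most `ε²` while the total
cost `∑_ℓ N_ℓ C_ℓ` is at most `c₄ ε⁻²`. -/
theorem stmt_15 {Ω : Type*} [MeasureSpace Ω] [IsProbabilityMeasure (ℙ : Measure Ω)]
    (P : Ω → ℝ) (Pl : ℕ → Ω → ℝ) (hPl0 : Pl 0 = 0)
    (hP : MemLp P 2 (ℙ : Measure Ω)) (hPlp : ∀ ℓ, MemLp (Pl ℓ) 2 (ℙ : Measure Ω))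
    (c₁ c₂ c₃ : ℝ) (hc₁ : 0 ≤ c₁) (hc₂ : 0 ≤ c₂) (hc₃ : 0 ≤ c₃)
    (α β γ : ℝ) (hαβγ : α ≥ min β γ / 2) (hβγ : β > γ) (hγ : γ > 0)
    (Cl : ℕ → ℝ) (hClnonneg : ∀ ℓ, 0 ≤ Cl ℓ)
    (hbias : ∀ ℓ : ℕ, |∫ ω, (Pl ℓ ω - P ω)| ≤ c₁ * 2 ^ (-α * ℓ))
    (hvar : ∀ ℓ : ℕ, 1 ≤ ℓ →
      variance (fun ω => Pl ℓ ω - Pl (ℓ - 1) ω) (ℙ : Measure Ω) ≤ c₂ * 2 ^ (-β * ℓ))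
    (hcost : ∀ ℓ : ℕ, Cl ℓ ≤ c₃ * 2 ^ (γ * ℓ)) :
    ∃ c₄ : ℝ, ∀ ε : ℝ, 0 < ε → ε < Real.exp (-1) →
      ∃ (L : ℕ) (N : ℕ → ℕ), (∀ ℓ, 1 ≤ ℓ → ℓ ≤ L → 1 ≤ N ℓ) ∧
        (∫ ω, (Pl L ω - P ω)) ^ 2
            + ∑ ℓ ∈ Finset.Icc 1 L,
                variance (fun ω => Pl ℓ ω - Pl (ℓ - 1) ω) (ℙ : Measure Ω) / (N ℓ : ℝ)
          ≤ ε ^ 2 ∧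
        ∑ ℓ ∈ Finset.Icc 1 L, (N ℓ : ℝ) * Cl ℓ ≤ c₄ * ε⁻¹ ^ 2 := by
  rw [min_eq_right hβγ.le] at hαβγ
  set δ : ℝ := (β - γ) / 2 with hδ
  have hδ0 : 0 < δ := by rw [hδ]; linarith
  set r : ℝ := (2:ℝ) ^ (-δ) with hr
  have hr0 : 0 < r := Real.rpow_pos_of_pos two_pos _
  have hr1 : r < 1 := Real.rpow_lt_one_of_one_lt_of_neg one_lt_two (by linarith)
  set s : ℝ := (2:ℝ) ^ γ with hs
  have hs1 : 1 < s := Real.one_lt_rpow_iff_of_pos two_pos |>.mpr (Or.inl ⟨one_lt_two, hγ⟩)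
  set S : ℝ := r / (1 - r) with hS
  have hS0 : 0 < S := div_pos hr0 (by linarith)
  set K : ℝ := 2 * (c₂ + 1) * S with hK
  have hK0 : 0 < K := by positivity
  set A : ℝ := (c₁ + 1) * Real.sqrt 2 with hA
  have hsqrt2 : (1:ℝ) < Real.sqrt 2 := by
    rw [show (1:ℝ) = Real.sqrt 1 by simp]
    exact Real.sqrt_lt_sqrt (by norm_num) (by norm_num)
  have hA1 : 1 < A := by nlinarith
  have hA2 : A ^ 2 = 2 * (c₁ + 1) ^ 2 := by
    rw [hA, mul_pow, Real.sq_sqrt (by norm_num : (0:ℝ) ≤ 2)]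
    ring
  -- conversion rpow ↔ pow
  have hpow : ∀ (t : ℝ) (ℓ : ℕ), (2:ℝ) ^ (t * (ℓ:ℝ)) = ((2:ℝ) ^ t) ^ ℓ := by
    intro t ℓ
    rw [Real.rpow_mul (by norm_num), Real.rpow_natCast]
  clear_value δ r s S K A
  refine ⟨c₃ * K * S + c₃ * (s * s / (s - 1)) * (2 * (c₁ + 1) ^ 2), ?_⟩
  intro ε hε hεe
  have hε1 : ε < 1 := lt_trans hεe (by
    rw [← Real.exp_zero]
    exact Real.exp_lt_exp.mpr (by norm_num))
  have hAε : 1 < A / ε := (one_lt_div hε).mpr (lt_trans hε1 hA1)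
  have hAε0 : 0 < A / ε := by linarith
  set x : ℝ := (2 / γ) * Real.logb 2 (A / ε) with hx
  have hlogb0 : 0 < Real.logb 2 (A / ε) := Real.logb_pos one_lt_two hAε
  have hx0 : 0 < x := by rw [hx]; positivity
  set L : ℕ := ⌈x⌉₊ with hL
  have hL1 : 1 ≤ L := Nat.one_le_iff_ne_zero.mpr (Nat.ceil_pos.mpr hx0).ne'
  have hxL : x ≤ (L : ℝ) := Nat.le_ceil x
  have hLx : (L : ℝ) < x + 1 := Nat.ceil_lt_add_one hx0.le
  -- key bound 1 : 2 ^ (-α L) ≤ ε / A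
  have key1 : (2:ℝ) ^ (-α * (L:ℝ)) ≤ ε / A := by
    have h1 : -α * (L:ℝ) ≤ -Real.logb 2 (A / ε) := by
      have h2 : Real.logb 2 (A / ε) = (γ / 2) * x := by
        rw [hx]; field_simp
      have h3 : (γ / 2) * x ≤ (γ / 2) * (L:ℝ) := by
        apply mul_le_mul_of_nonneg_left hxL (by linarith)
      have h4 : (γ / 2) * (L:ℝ) ≤ α * (L:ℝ) := by
        apply mul_le_mul_of_nonneg_right hαβγ (Nat.cast_nonneg L)
      linarith
    calc (2:ℝ) ^ (-α * (L:ℝ)) ≤ (2:ℝ) ^ (-Real.logb 2 (A / ε)) :=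
          Real.rpow_le_rpow_of_exponent_le (by norm_num) h1
      _ = ε / A := by
          rw [Real.rpow_neg (by norm_num), Real.rpow_logb two_pos (by norm_num) hAε0,
            inv_div]
  -- key bound 2 : s ^ L ≤ s * (A/ε)^2
  have key2 : s ^ L ≤ s * ((A / ε) ^ 2) := by
    have h1 : γ * (L:ℝ) ≤ 2 * Real.logb 2 (A / ε) + γ := by
      have := mul_lt_mul_of_pos_left hLx hγ
      have h2 : γ * x = 2 * Real.logb 2 (A / ε) := by
        rw [hx]; field_simp
      nlinarith
    calc s ^ L = (2:ℝ) ^ (γ * (L:ℝ)) := by rw [hs]; exact (hpow γ L).symm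
      _ ≤ (2:ℝ) ^ (2 * Real.logb 2 (A / ε) + γ) :=
          Real.rpow_le_rpow_of_exponent_le (by norm_num) h1
      _ = s * ((A / ε) ^ 2) := by
          rw [Real.rpow_add two_pos, show (2:ℝ) * Real.logb 2 (A / ε)
              = Real.logb 2 (A / ε) + Real.logb 2 (A / ε) by ring,
            Real.rpow_add two_pos, Real.rpow_logb two_pos (by norm_num) hAε0, hs]
          ring
  -- sample sizes
  set N : ℕ → ℕ := fun ℓ => ⌈K * (2:ℝ) ^ (-(β + γ) / 2 * (ℓ:ℝ)) * ε⁻¹ ^ 2⌉₊ with hN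
  have hNpos : ∀ ℓ : ℕ, 0 < K * (2:ℝ) ^ (-(β + γ) / 2 * (ℓ:ℝ)) * ε⁻¹ ^ 2 := by
    intro ℓ
    have := Real.rpow_pos_of_pos two_pos (-(β + γ) / 2 * (ℓ:ℝ))
    positivity
  have hN1 : ∀ ℓ, 1 ≤ N ℓ := fun ℓ => Nat.one_le_iff_ne_zero.mpr (Nat.ceil_pos.mpr (hNpos ℓ)).ne'
  have hNge : ∀ ℓ : ℕ, K * (2:ℝ) ^ (-(β + γ) / 2 * (ℓ:ℝ)) * ε⁻¹ ^ 2 ≤ (N ℓ : ℝ) :=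
    fun ℓ => Nat.le_ceil _
  have hNle : ∀ ℓ : ℕ, (N ℓ : ℝ) ≤ K * (2:ℝ) ^ (-(β + γ) / 2 * (ℓ:ℝ)) * ε⁻¹ ^ 2 + 1 :=
    fun ℓ => (Nat.ceil_lt_add_one (hNpos ℓ).le).le
  clear_value x L N
  refine ⟨L, N, fun ℓ _ _ => hN1 ℓ, ?_, ?_⟩
  · -- MSE bound
    have hbias2 : (∫ ω, (Pl L ω - P ω)) ^ 2 ≤ ε ^ 2 / 2 := by
      have h1 : |∫ ω, (Pl L ω - P ω)| ≤ c₁ * (ε / A) :=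
        le_trans (hbias L) (mul_le_mul_of_nonneg_left key1 hc₁)
      have h2 : (∫ ω, (Pl L ω - P ω)) ^ 2 ≤ (c₁ * (ε / A)) ^ 2 := by
        rw [← sq_abs]
        exact pow_le_pow_left₀ (abs_nonneg _) h1 2
      have h3 : (c₁ * (ε / A)) ^ 2 ≤ ε ^ 2 / 2 := by
        rw [mul_pow, div_pow, hA2, mul_div_assoc',
          div_le_div_iff₀ (by positivity) (by norm_num : (0:ℝ) < 2)]
        nlinarith [sq_nonneg ε, hc₁]
      linarith
    have hvarsum : ∑ ℓ ∈ Finset.Icc 1 L,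
        variance (fun ω => Pl ℓ ω - Pl (ℓ - 1) ω) (ℙ : Measure Ω) / (N ℓ : ℝ)
          ≤ ε ^ 2 / 2 := by
      have hterm : ∀ ℓ ∈ Finset.Icc 1 L,
          variance (fun ω => Pl ℓ ω - Pl (ℓ - 1) ω) (ℙ : Measure Ω) / (N ℓ : ℝ)
            ≤ c₂ / K * ε ^ 2 * r ^ ℓ := by
        intro ℓ hℓ
        have hℓ1 : 1 ≤ ℓ := (Finset.mem_Icc.mp hℓ).1
        have hu : (0:ℝ) < (2:ℝ) ^ (-(β + γ) / 2 * (ℓ:ℝ)) := Real.rpow_pos_of_pos two_pos _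
        have hd : variance (fun ω => Pl ℓ ω - Pl (ℓ - 1) ω) (ℙ : Measure Ω) / (N ℓ : ℝ)
            ≤ (c₂ * 2 ^ (-β * (ℓ:ℝ))) / (K * (2:ℝ) ^ (-(β + γ) / 2 * (ℓ:ℝ)) * ε⁻¹ ^ 2) := by
          apply div_le_div₀ (by positivity) (hvar ℓ hℓ1) (hNpos ℓ) (hNge ℓ)
        refine le_trans hd (le_of_eq ?_)
        have hsplit : (2:ℝ) ^ (-β * (ℓ:ℝ))
            = (2:ℝ) ^ (-(β + γ) / 2 * (ℓ:ℝ)) * r ^ ℓ := by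
          rw [hr, ← hpow, ← Real.rpow_add two_pos]
          congr 1
          rw [hδ]; ring
        rw [hsplit]
        field_simp
      calc ∑ ℓ ∈ Finset.Icc 1 L,
            variance (fun ω => Pl ℓ ω - Pl (ℓ - 1) ω) (ℙ : Measure Ω) / (N ℓ : ℝ)
          ≤ ∑ ℓ ∈ Finset.Icc 1 L, c₂ / K * ε ^ 2 * r ^ ℓ := Finset.sum_le_sum hterm
        _ = c₂ / K * ε ^ 2 * ∑ ℓ ∈ Finset.Icc 1 L, r ^ ℓ := by rw [Finset.mul_sum]
        _ ≤ c₂ / K * ε ^ 2 * S :=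
            mul_le_mul_of_nonneg_left (hS ▸ geomIccA hr0.le hr1 L) (by positivity)
        _ ≤ ε ^ 2 / 2 := by
            rw [hK]
            rw [div_mul_eq_mul_div, div_mul_eq_mul_div, div_le_div_iff₀ (by positivity)
              (by norm_num : (0:ℝ) < 2)]
            nlinarith [sq_nonneg ε, hS0]
    linarith
  · -- cost bound
    have hterm : ∀ ℓ ∈ Finset.Icc 1 L,
        (N ℓ : ℝ) * Cl ℓ ≤ c₃ * K * ε⁻¹ ^ 2 * r ^ ℓ + c₃ * s ^ ℓ := by
      intro ℓ hℓ
      have hu : (0:ℝ) < (2:ℝ) ^ (-(β + γ) / 2 * (ℓ:ℝ)) := Real.rpow_pos_of_pos two_pos _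
      have h1 : (N ℓ : ℝ) * Cl ℓ
          ≤ (K * (2:ℝ) ^ (-(β + γ) / 2 * (ℓ:ℝ)) * ε⁻¹ ^ 2 + 1) * (c₃ * s ^ ℓ) := by
        apply mul_le_mul (hNle ℓ) _ (hClnonneg ℓ) (by positivity)
        rw [hs, ← hpow]
        exact hcost ℓ
      refine le_trans h1 (le_of_eq ?_)
      have hmul : (2:ℝ) ^ (-(β + γ) / 2 * (ℓ:ℝ)) * s ^ ℓ = r ^ ℓ := by
        rw [hs, hr, ← hpow, ← hpow, ← Real.rpow_add two_pos]
        congr 1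
        rw [hδ]; ring
      calc (K * (2:ℝ) ^ (-(β + γ) / 2 * (ℓ:ℝ)) * ε⁻¹ ^ 2 + 1) * (c₃ * s ^ ℓ)
          = c₃ * K * ε⁻¹ ^ 2 * ((2:ℝ) ^ (-(β + γ) / 2 * (ℓ:ℝ)) * s ^ ℓ) + c₃ * s ^ ℓ := by
            ring
        _ = c₃ * K * ε⁻¹ ^ 2 * r ^ ℓ + c₃ * s ^ ℓ := by rw [hmul]
    calc ∑ ℓ ∈ Finset.Icc 1 L, (N ℓ : ℝ) * Cl ℓ
        ≤ ∑ ℓ ∈ Finset.Icc 1 L, (c₃ * K * ε⁻¹ ^ 2 * r ^ ℓ + c₃ * s ^ ℓ) :=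
          Finset.sum_le_sum hterm
      _ = c₃ * K * ε⁻¹ ^ 2 * (∑ ℓ ∈ Finset.Icc 1 L, r ^ ℓ)
          + c₃ * (∑ ℓ ∈ Finset.Icc 1 L, s ^ ℓ) := by
          rw [Finset.sum_add_distrib, Finset.mul_sum, Finset.mul_sum]
      _ ≤ c₃ * K * ε⁻¹ ^ 2 * S + c₃ * (s / (s - 1) * s ^ L) := by
          gcongr
          · exact hS ▸ geomIccA hr0.le hr1 L
          · exact geomIccB hs1 L
      _ ≤ (c₃ * K * S + c₃ * (s * s / (s - 1)) * (2 * (c₁ + 1) ^ 2)) * ε⁻¹ ^ 2 := by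
          have h5 : c₃ * (s / (s - 1) * s ^ L)
              ≤ c₃ * (s * s / (s - 1)) * (2 * (c₁ + 1) ^ 2) * ε⁻¹ ^ 2 := by
            have h6 : s ^ L ≤ s * (A ^ 2 * ε⁻¹ ^ 2) := by
              have := key2
              rw [div_pow] at this
              rw [div_eq_mul_inv, ← inv_pow] at this
              linarith [this]
            have h7 : 0 < s / (s - 1) := by
              apply div_pos (by linarith) (by linarith)
            calc c₃ * (s / (s - 1) * s ^ L) ≤ c₃ * (s / (s - 1) * (s * (A ^ 2 * ε⁻¹ ^ 2))) := by
                  gcongr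
              _ = c₃ * (s * s / (s - 1)) * (2 * (c₁ + 1) ^ 2) * ε⁻¹ ^ 2 := by
                  rw [hA2]; field_simp
          nlinarith [hS0, hK0, sq_nonneg ε⁻¹]
      _ = (c₃ * K * S + c₃ * (s * s / (s - 1)) * (2 * (c₁ + 1) ^ 2)) * ε⁻¹ ^ 2 := rfl
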